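/- Let $[l_1,r_1], [l_2,r_2], \dots, [l_k,r_k]$ be intervals with $l_1 < l_2 < \dots < l_k$ and $r_1 \le r_2 \le \dots \le r_k$. For a query window $[t_s,t_e]$, define the window to 'cover' interval $i$ if $t_s \le l_i$ and $r_i \le t_e$. Construct triples $[l_i, r_i, r_{i+1}]$ for $1 \le i < k$ and $[l_k, r_k, \infty]$. Then: (a) if $[t_s,t_e]$ covers at least one interval, exactly one triple $[l,r_1',r_2']$ satisfies $t_s \le l$ and $r_1' \le t_e < r_2'$; (b) if $[t_s,t_e]$ covers no interval, no triple satisfies this condition. -/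

import Mathlib

/-- Correctness of the redefined active timestamps: given a chain of intervals
`[l i, r i]` with strictly increasing left endpoints and non-decreasing right
endpoints, converted into triples `[l i, r i, r (i+1)]` (and `[l (k-1), r (k-1), ∞]`
for the last one), a window `[ts,te]` activates exactly one triple if it covers
some interval, and activates none otherwise.  A triple `i` is *active* when
`ts ≤ l i`, `r i ≤ te`, and `te < r (i+1)` whenever `i+1 < k`. -/
theorem stmt16 (k : ℕ) (l r : Fin k → ℝ)
    (hl : StrictMono l) (hr : Monotone r) (hlr : ∀ i, l i ≤ r i)
    (ts te : ℝ) :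
    ((∃ i, ts ≤ l i ∧ r i ≤ te) →
      ∃! i : Fin k, ts ≤ l i ∧ r i ≤ te ∧
        ∀ h : (i : ℕ) + 1 < k, te < r ⟨(i : ℕ) + 1, h⟩) ∧
    ((∀ i, ¬(ts ≤ l i ∧ r i ≤ te)) →
      ∀ i : Fin k, ¬(ts ≤ l i ∧ r i ≤ te ∧
        ∀ h : (i : ℕ) + 1 < k, te < r ⟨(i : ℕ) + 1, h⟩)) := by
  classical
  constructor
  · rintro ⟨i0, hi0⟩
    set S : Finset (Fin k) := Finset.univ.filter (fun i => ts ≤ l i ∧ r i ≤ te) with hS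
    have hne : S.Nonempty := ⟨i0, by simp [hS, hi0.1, hi0.2]⟩
    set m := S.max' hne with hm
    have hmS : m ∈ S := S.max'_mem hne
    simp only [hS, Finset.mem_filter, Finset.mem_univ, true_and] at hmS
    refine ⟨m, ⟨hmS.1, hmS.2, ?_⟩, ?_⟩
    · intro h
      by_contra hle
      push_neg at hle
      have hmem : (⟨(m:ℕ)+1, h⟩ : Fin k) ∈ S := by
        simp only [hS, Finset.mem_filter, Finset.mem_univ, true_and]
        exact ⟨le_trans hmS.1 (le_of_lt (hl (by simp [Fin.lt_def]))), hle⟩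
      have := S.le_max' _ hmem
      rw [Fin.le_def] at this
      simp at this
      exact lt_irrefl m this
    · rintro j ⟨hj1, hj2, hj3⟩
      have hjS : j ∈ S := by
        simp only [hS, Finset.mem_filter, Finset.mem_univ, true_and]
        exact ⟨hj1, hj2⟩
      have hjm : j ≤ m := S.le_max' _ hjS
      rcases eq_or_lt_of_le hjm with h | h
      · exact h
      · exfalso
        have hlt : (j:ℕ) < (m:ℕ) := Fin.lt_def.mp h
        have hk : (j:ℕ)+1 < k := by
          have := m.isLt; omega
        have h1 : te < r ⟨(j:ℕ)+1, hk⟩ := hj3 hk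
        have h2 : r (⟨(j:ℕ)+1, hk⟩ : Fin k) ≤ r m := by
          apply hr; rw [Fin.le_def]; simpa using hlt
        linarith [hmS.2]
  · intro h i hi
    exact h i ⟨hi.1, hi.2.1⟩
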